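/- Let ρ be a density operator and let G be a set of full-rank density operators of the form exp(H)/Tr(exp(H)) with H ranging over a linear subspace V of Hermitian operators. Suppose σ ∈ G satisfies Tr(ρ H) = Tr(σ H) for all H ∈ V. Then σ minimizes the relative entropy S(ρ‖·) over G, and the minimum value equals S(σ) − S(ρ). -/

import Mathlib

open scoped ComplexOrder

/-- Matrix logarithm of a Hermitian matrix, via the spectral decomposition. -/
noncomputable def mlog {n : ℕ} (A : Matrix (Fin n) (Fin n) ℂ) :
    Matrix (Fin n) (Fin n) ℂ :=
  if hA : A.IsHermitian then
    (hA.eigenvectorUnitary : Matrix (Fin n) (Fin n) ℂ) *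
      Matrix.diagonal (fun i => (Real.log (hA.eigenvalues i) : ℂ)) *
      star (hA.eigenvectorUnitary : Matrix (Fin n) (Fin n) ℂ)
  else 0

/-- The von Neumann entropy `S(ρ) = −Tr(ρ log ρ)`. -/
noncomputable def vnEntropy {n : ℕ} (ρ : Matrix (Fin n) (Fin n) ℂ) : ℝ :=
  -(Matrix.trace (ρ * mlog ρ)).re

/-- The quantum relative entropy `S(ρ‖τ) = Tr(ρ log ρ) − Tr(ρ log τ)`. -/
noncomputable def relEntropy {n : ℕ} (ρ τ : Matrix (Fin n) (Fin n) ℂ) : ℝ :=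
  (Matrix.trace (ρ * mlog ρ) - Matrix.trace (ρ * mlog τ)).re

namespace GibbsAux

open Matrix

variable {n : ℕ}

lemma mlog_eq_cfc (A : Matrix (Fin n) (Fin n) ℂ) (hA : A.IsHermitian) :
    mlog A = cfc Real.log A := by
  rw [mlog, dif_pos hA, Matrix.IsHermitian.cfc_eq, Matrix.IsHermitian.cfc]
  rfl

lemma spectral' (A : Matrix (Fin n) (Fin n) ℂ) (hA : A.IsHermitian) :
    A = (hA.eigenvectorUnitary : Matrix (Fin n) (Fin n) ℂ) *
      Matrix.diagonal (fun k => (hA.eigenvalues k : ℂ)) *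
      star (hA.eigenvectorUnitary : Matrix (Fin n) (Fin n) ℂ) := by
  convert hA.spectral_theorem using 2
  rw [Unitary.conjStarAlgAut_apply]; rfl

lemma mlog_spec (A : Matrix (Fin n) (Fin n) ℂ) (hA : A.IsHermitian) :
    mlog A = (hA.eigenvectorUnitary : Matrix (Fin n) (Fin n) ℂ) *
      Matrix.diagonal (fun k => (Real.log (hA.eigenvalues k) : ℂ)) *
      star (hA.eigenvectorUnitary : Matrix (Fin n) (Fin n) ℂ) := by
  rw [mlog, dif_pos hA]

lemma trace_eq_sum_eig (A : Matrix (Fin n) (Fin n) ℂ) (hA : A.IsHermitian) (h1 : A.trace = 1) :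
    ∑ k, hA.eigenvalues k = 1 := by
  have h2 := congrArg Matrix.trace (spectral' A hA)
  rw [h1, Matrix.trace_mul_cycle,
    Unitary.star_mul_self_of_mem hA.eigenvectorUnitary.2, Matrix.one_mul,
    Matrix.trace_diagonal] at h2
  exact_mod_cast h2.symm

lemma trace_conj_pair (U W : Matrix (Fin n) (Fin n) ℂ) (d e : Fin n → ℝ) :
    (Matrix.trace ((U * Matrix.diagonal (fun k => (d k : ℂ)) * star U) *
        (W * Matrix.diagonal (fun l => (e l : ℂ)) * star W))).re
      = ∑ l, ∑ k, Complex.normSq ((star W * U) l k) * (d k * e l) := by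
  set N := star W * U with hN
  have hsN : star N = star U * W := by rw [hN, StarMul.star_mul, star_star]
  have h1 : (U * Matrix.diagonal (fun k => (d k : ℂ)) * star U) *
        (W * Matrix.diagonal (fun l => (e l : ℂ)) * star W)
      = U * (Matrix.diagonal (fun k => (d k : ℂ)) * star N *
          Matrix.diagonal (fun l => (e l : ℂ))) * star W := by
    rw [hsN]
    simp only [Matrix.mul_assoc]
  rw [h1, Matrix.trace_mul_cycle, Matrix.mul_assoc, ← Matrix.mul_assoc (star W) U, ← hN,
    ← Matrix.mul_assoc, ← Matrix.mul_assoc]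
  have h2 : Matrix.trace ((N * Matrix.diagonal (fun k => (d k : ℂ)) * star N) *
      Matrix.diagonal (fun l => (e l : ℂ)))
      = ∑ l, (∑ k, N l k * (d k : ℂ) * star (N l k)) * (e l : ℂ) := by
    simp [Matrix.trace, Matrix.mul_apply, Matrix.diagonal_apply, Matrix.diag,
      star_eq_conjTranspose, Matrix.conjTranspose_apply, Finset.sum_mul]
  rw [h2, Complex.re_sum]
  refine Finset.sum_congr rfl fun l _ => ?_
  rw [Finset.sum_mul, Complex.re_sum]
  refine Finset.sum_congr rfl fun k _ => ?_
  have : N l k * (d k : ℂ) * star (N l k) * (e l : ℂ)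
      = ((Complex.normSq (N l k) * (d k * e l) : ℝ) : ℂ) := by
    have hmc : N l k * star (N l k) = ((Complex.normSq (N l k) : ℝ) : ℂ) := Complex.mul_conj _
    push_cast
    rw [← hmc]; ring
  rw [this, Complex.ofReal_re]

lemma row_sum_one (N : Matrix (Fin n) (Fin n) ℂ) (h : N * star N = 1) (l : Fin n) :
    ∑ k, Complex.normSq (N l k) = 1 := by
  have h2 : (N * star N) l l = (1 : Matrix (Fin n) (Fin n) ℂ) l l := by rw [h]
  have : (∑ k, (Complex.normSq (N l k) : ℂ)) = 1 := by
    simpa [Matrix.mul_apply, star_eq_conjTranspose, Matrix.conjTranspose_apply,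
      Complex.mul_conj] using h2
  exact_mod_cast this

lemma col_sum_one (N : Matrix (Fin n) (Fin n) ℂ) (h : star N * N = 1) (k : Fin n) :
    ∑ l, Complex.normSq (N l k) = 1 := by
  have := row_sum_one (star N) (by rwa [star_star]) k
  simpa [star_eq_conjTranspose, Matrix.conjTranspose_apply] using this

/-- The purely real Klein-type inequality. -/
lemma klein_real (w : Fin n → Fin n → ℝ) (p q : Fin n → ℝ)
    (hw : ∀ l k, 0 ≤ w l k)
    (hrow : ∀ l, ∑ k, w l k = 1) (hcol : ∀ k, ∑ l, w l k = 1)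
    (hp : ∀ k, 0 < p k) (hq : ∀ l, 0 < q l)
    (hp1 : ∑ k, p k = 1) (hq1 : ∑ l, q l = 1) :
    ∑ l, ∑ k, w l k * (p k * Real.log (q l)) ≤ ∑ k, p k * Real.log (p k) := by
  have key : ∀ l k, w l k * (p k * Real.log (q l))
      ≤ w l k * (p k * Real.log (p k)) + w l k * (q l - p k) := by
    intro l k
    have hlog : Real.log (q l) - Real.log (p k) ≤ q l / p k - 1 := by
      have h := Real.log_le_sub_one_of_pos (div_pos (hq l) (hp k))
      rwa [Real.log_div (hq l).ne' (hp k).ne'] at h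
    have h2 : p k * (Real.log (q l) - Real.log (p k)) ≤ q l - p k := by
      have h3 := mul_le_mul_of_nonneg_left hlog (hp k).le
      have h4 : p k * (q l / p k - 1) = q l - p k := by
        rw [mul_sub, mul_div_cancel₀ _ (hp k).ne', mul_one]
      linarith [h3, h4.le]
    nlinarith [mul_le_mul_of_nonneg_left h2 (hw l k)]
  calc ∑ l, ∑ k, w l k * (p k * Real.log (q l))
      ≤ ∑ l, ∑ k, (w l k * (p k * Real.log (p k)) + w l k * (q l - p k)) := by
        refine Finset.sum_le_sum fun l _ => Finset.sum_le_sum fun k _ => key l k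
    _ = (∑ l, ∑ k, w l k * (p k * Real.log (p k))) + (∑ l, ∑ k, w l k * (q l - p k)) := by
        rw [← Finset.sum_add_distrib]
        exact Finset.sum_congr rfl fun l _ => by rw [← Finset.sum_add_distrib]
    _ = ∑ k, p k * Real.log (p k) := by
        have e1 : (∑ l, ∑ k, w l k * (p k * Real.log (p k))) = ∑ k, p k * Real.log (p k) := by
          rw [Finset.sum_comm]
          refine Finset.sum_congr rfl fun k _ => ?_
          rw [← Finset.sum_mul, hcol k, one_mul]
        have e2 : (∑ l, ∑ k, w l k * (q l - p k)) = 0 := by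
          have h5 : ∀ l, ∑ k, w l k * (q l - p k) = q l - ∑ k, w l k * p k := by
            intro l
            simp_rw [mul_sub]
            rw [Finset.sum_sub_distrib, ← Finset.sum_mul, hrow l, one_mul]
          simp_rw [h5]
          rw [Finset.sum_sub_distrib, hq1, Finset.sum_comm]
          have h6 : ∀ k, ∑ l, w l k * p k = p k := fun k => by
            rw [← Finset.sum_mul, hcol k, one_mul]
          simp_rw [h6, hp1, sub_self]
        rw [e1, e2, add_zero]

/-- Klein's inequality for density matrices. -/
lemma klein_matrix (σ τ : Matrix (Fin n) (Fin n) ℂ)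
    (hσ : σ.PosDef) (hτ : τ.PosDef) (hσ1 : σ.trace = 1) (hτ1 : τ.trace = 1) :
    (Matrix.trace (σ * mlog τ)).re ≤ (Matrix.trace (σ * mlog σ)).re := by
  have hσ' : σ.IsHermitian := hσ.1
  have hτ' : τ.IsHermitian := hτ.1
  set U : Matrix (Fin n) (Fin n) ℂ := (hσ'.eigenvectorUnitary : Matrix (Fin n) (Fin n) ℂ)
    with hU
  set W : Matrix (Fin n) (Fin n) ℂ := (hτ'.eigenvectorUnitary : Matrix (Fin n) (Fin n) ℂ)
    with hW
  have hUs : star U * U = 1 := Unitary.star_mul_self_of_mem hσ'.eigenvectorUnitary.2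
  have hUss : U * star U = 1 := Unitary.mul_star_self_of_mem hσ'.eigenvectorUnitary.2
  have hWs : star W * W = 1 := Unitary.star_mul_self_of_mem hτ'.eigenvectorUnitary.2
  have hWss : W * star W = 1 := Unitary.mul_star_self_of_mem hτ'.eigenvectorUnitary.2
  set p := hσ'.eigenvalues with hp
  set q := hτ'.eigenvalues with hq
  have hσspec : σ = U * Matrix.diagonal (fun k => (p k : ℂ)) * star U := spectral' σ hσ'
  have hmlogσ : mlog σ = U * Matrix.diagonal (fun k => (Real.log (p k) : ℂ)) * star U :=
    mlog_spec σ hσ'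
  have hmlogτ : mlog τ = W * Matrix.diagonal (fun l => (Real.log (q l) : ℂ)) * star W :=
    mlog_spec τ hτ'
  set N := star W * U with hN
  have hNrow : ∀ l, ∑ k, Complex.normSq (N l k) = 1 := by
    intro l
    refine row_sum_one N ?_ l
    rw [hN, StarMul.star_mul, star_star, Matrix.mul_assoc, ← Matrix.mul_assoc U, hUss,
      Matrix.one_mul, hWs]
  have hNcol : ∀ k, ∑ l, Complex.normSq (N l k) = 1 := by
    intro k
    refine col_sum_one N ?_ k
    rw [hN, StarMul.star_mul, star_star, Matrix.mul_assoc, ← Matrix.mul_assoc W, hWss,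
      Matrix.one_mul, hUs]
  have hppos : ∀ k, 0 < p k := fun k => hσ.eigenvalues_pos k
  have hqpos : ∀ l, 0 < q l := fun l => hτ.eigenvalues_pos l
  have hpsum : ∑ k, p k = 1 := trace_eq_sum_eig σ hσ' hσ1
  have hqsum : ∑ l, q l = 1 := trace_eq_sum_eig τ hτ' hτ1
  have lhs_eq : (Matrix.trace (σ * mlog τ)).re
      = ∑ l, ∑ k, Complex.normSq (N l k) * (p k * Real.log (q l)) := by
    rw [hσspec, hmlogτ, trace_conj_pair]
  have rhs_eq : (Matrix.trace (σ * mlog σ)).re = ∑ k, p k * Real.log (p k) := by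
    rw [hmlogσ]
    conv_lhs => rw [hσspec]
    rw [trace_conj_pair, hUs]
    simp [Matrix.one_apply, apply_ite Complex.normSq, ite_mul]
  rw [lhs_eq, rhs_eq]
  exact klein_real (fun l k => Complex.normSq (N l k)) p q
    (fun l k => Complex.normSq_nonneg _) hNrow hNcol hppos hqpos hpsum hqsum

/-- Positive definiteness of a unitary conjugate of a positive diagonal. -/
lemma posDef_conj (U : Matrix (Fin n) (Fin n) ℂ) (hUss : U * star U = 1)
    {d : Fin n → ℝ} (hd : ∀ i, 0 < d i) :
    (U * Matrix.diagonal (fun i => (d i : ℂ)) * star U).PosDef := by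
  have hD : (Matrix.diagonal (fun i => (d i : ℂ))).PosDef := by
    refine Matrix.PosDef.diagonal fun i => ?_
    exact_mod_cast hd i
  refine Matrix.posDef_iff_dotProduct_mulVec.mpr ⟨?_, ?_⟩
  · rw [star_eq_conjTranspose]
    exact Matrix.isHermitian_mul_mul_conjTranspose U hD.1
  · intro x hx
    have hy : star U *ᵥ x ≠ 0 := by
      intro h0
      apply hx
      have : U *ᵥ (star U *ᵥ x) = x := by
        rw [Matrix.mulVec_mulVec, hUss, Matrix.one_mulVec]
      rw [h0, Matrix.mulVec_zero] at this
      exact this.symm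
    have h5 : star (star U *ᵥ x) = star x ᵥ* U := by
      rw [Matrix.star_mulVec, star_eq_conjTranspose, Matrix.conjTranspose_conjTranspose]
    have key : star x ⬝ᵥ (U * Matrix.diagonal (fun i => (d i : ℂ)) * star U) *ᵥ x
        = star (star U *ᵥ x) ⬝ᵥ Matrix.diagonal (fun i => (d i : ℂ)) *ᵥ (star U *ᵥ x) := by
      rw [← Matrix.mulVec_mulVec, ← Matrix.mulVec_mulVec, Matrix.dotProduct_mulVec (star x), h5]
    rw [key]
    exact hD.dotProduct_mulVec_pos hy

/-- Basic facts about a Gibbs state `(Tr exp K)⁻¹ • exp K`. -/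
lemma gibbs_facts (hn : 0 < n) (K : Matrix (Fin n) (Fin n) ℂ) (hK : K.IsHermitian) :
    ((Matrix.trace (NormedSpace.exp K))⁻¹ • NormedSpace.exp K).PosDef ∧
    ((Matrix.trace (NormedSpace.exp K))⁻¹ • NormedSpace.exp K).trace = 1 ∧
    ∃ c : ℝ, mlog ((Matrix.trace (NormedSpace.exp K))⁻¹ • NormedSpace.exp K)
      = K - c • (1 : Matrix (Fin n) (Fin n) ℂ) := by
  letI : NormedRing (Matrix (Fin n) (Fin n) ℂ) := Matrix.linftyOpNormedRing
  letI : NormedAlgebra ℝ (Matrix (Fin n) (Fin n) ℂ) := Matrix.linftyOpNormedAlgebra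
  haveI : Nonempty (Fin n) := ⟨⟨0, hn⟩⟩
  have hKsa : IsSelfAdjoint K := hK.isSelfAdjoint
  have hexp : NormedSpace.exp K = NormedSpace.exp K := rfl
  have hcfc : NormedSpace.exp K = cfc Real.exp K :=
    (@CFC.real_exp_eq_normedSpace_exp _ _ _ _ Matrix.IsHermitian.instContinuousFunctionalCalculus _ hKsa).symm
  set U : Matrix (Fin n) (Fin n) ℂ := (hK.eigenvectorUnitary : Matrix (Fin n) (Fin n) ℂ)
    with hU
  have hUss : U * star U = 1 := Unitary.mul_star_self_of_mem hK.eigenvectorUnitary.2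
  have hUs : star U * U = 1 := Unitary.star_mul_self_of_mem hK.eigenvectorUnitary.2
  have hspec : cfc Real.exp K
      = U * Matrix.diagonal (fun i => ((Real.exp (hK.eigenvalues i) : ℝ) : ℂ)) * star U := by
    rw [hK.cfc_eq, Matrix.IsHermitian.cfc]
    rfl
  -- the partition function
  set Zr : ℝ := ∑ i, Real.exp (hK.eigenvalues i) with hZr
  have hZrpos : 0 < Zr := Finset.sum_pos (fun i _ => Real.exp_pos _) Finset.univ_nonempty
  have hZ : Matrix.trace (NormedSpace.exp K) = (Zr : ℂ) := by
    rw [hexp, hcfc, hspec, Matrix.trace_mul_cycle, hUs, Matrix.one_mul, Matrix.trace_diagonal,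
      hZr]
    push_cast
    rfl
  -- positivity of the spectrum of exp K
  have hspecpos : ∀ x ∈ spectrum ℝ (NormedSpace.exp K), 0 < x := by
    rw [hcfc, cfc_map_spectrum Real.exp K hKsa Real.continuous_exp.continuousOn]
    rintro x ⟨y, -, rfl⟩
    exact Real.exp_pos y
  -- real smul form
  have hsmul : (Matrix.trace (NormedSpace.exp K))⁻¹ • NormedSpace.exp K
      = Zr⁻¹ • NormedSpace.exp K := by
    rw [hZ, hexp, ← Complex.ofReal_inv]
    ext i j
    simp [Matrix.smul_apply, Complex.real_smul]
  refine ⟨?_, ?_, ?_⟩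
  · -- PosDef
    rw [hsmul, hcfc, hspec]
    have hdiag : Matrix.diagonal (fun i => ((Zr⁻¹ * Real.exp (hK.eigenvalues i) : ℝ) : ℂ))
        = Zr⁻¹ • Matrix.diagonal (fun i => ((Real.exp (hK.eigenvalues i) : ℝ) : ℂ)) := by
      ext i j
      rcases eq_or_ne i j with h | h
      · subst h
        simp [Matrix.diagonal_apply_eq, Matrix.smul_apply, Complex.real_smul]
      · simp [Matrix.diagonal_apply_ne _ h, Matrix.smul_apply, h]
    have : Zr⁻¹ • (U * Matrix.diagonal (fun i => ((Real.exp (hK.eigenvalues i) : ℝ) : ℂ)) * star U)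
        = U * Matrix.diagonal (fun i => ((Zr⁻¹ * Real.exp (hK.eigenvalues i) : ℝ) : ℂ)) * star U := by
      rw [hdiag, Matrix.mul_smul, Matrix.smul_mul]
    rw [this]
    exact posDef_conj U hUss fun i => mul_pos (inv_pos.2 hZrpos) (Real.exp_pos _)
  · -- trace = 1
    rw [Matrix.trace_smul, hZ, smul_eq_mul]
    exact inv_mul_cancel₀ (by exact_mod_cast hZrpos.ne')
  · -- mlog
    refine ⟨Real.log Zr, ?_⟩
    have hexpsa' : IsSelfAdjoint (NormedSpace.exp K) := by
      rw [hcfc]; exact cfc_predicate _ _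
    have hτsa : IsSelfAdjoint (Zr⁻¹ • NormedSpace.exp K) :=
      IsSelfAdjoint.smul (star_trivial _) hexpsa'
    have hτherm : (Zr⁻¹ • NormedSpace.exp K).IsHermitian := hτsa
    have hmlog : mlog (Zr⁻¹ • NormedSpace.exp K) = @CFC.log _ _ _ _ Matrix.IsHermitian.instContinuousFunctionalCalculus (Zr⁻¹ • NormedSpace.exp K) := by
      rw [mlog_eq_cfc _ hτherm]
      rfl
    have hexpsa : IsSelfAdjoint (NormedSpace.exp K) := by
      rw [hcfc]; exact cfc_predicate _ _
    rw [hsmul, hmlog, @CFC.log_smul _ _ _ _ Matrix.IsHermitian.instContinuousFunctionalCalculus _ _ (fun x hx => (hspecpos x hx).ne') (inv_pos.2 hZrpos).ne' hexpsa]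
    erw [@CFC.log_exp _ _ _ _ Matrix.IsHermitian.instContinuousFunctionalCalculus K hKsa]
    rw [Algebra.algebraMap_eq_smul_one, Real.log_inv]
    rw [neg_smul, sub_eq_neg_add]

end GibbsAux

/-- If `σ` is a Gibbs state `exp(H)/Tr(exp H)` over a linear subspace `V` of
Hermitian operators and matches the `V`-moments of `ρ`, then `σ` minimizes the
relative entropy `S(ρ‖·)` over the Gibbs family `G`, with minimum value
`S(σ) − S(ρ)`. -/
theorem gibbs_min_relEntropy {n : ℕ} (ρ σ : Matrix (Fin n) (Fin n) ℂ)
    (hρ : ρ.PosDef) (hρ1 : ρ.trace = 1)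
    (V : Submodule ℝ (Matrix (Fin n) (Fin n) ℂ))
    (hV : ∀ H ∈ V, H.IsHermitian)
    (G : Set (Matrix (Fin n) (Fin n) ℂ))
    (hG : G = {τ | ∃ H ∈ V,
      τ = (Matrix.trace (NormedSpace.exp H))⁻¹ • NormedSpace.exp H})
    (hσG : σ ∈ G)
    (hmatch : ∀ H ∈ V, (ρ * H).trace = (σ * H).trace) :
    (∀ τ ∈ G, relEntropy ρ σ ≤ relEntropy ρ τ) ∧
      relEntropy ρ σ = vnEntropy σ - vnEntropy ρ := by
  rcases Nat.eq_zero_or_pos n with hn | hn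
  · subst hn
    constructor
    · intro τ _
      simp [relEntropy, Matrix.trace]
    · simp [relEntropy, vnEntropy, Matrix.trace]
  -- the Gibbs structure of σ
  rw [hG] at hσG
  obtain ⟨Hσ, hHσV, hσdef⟩ := hσG
  have hfactsσ := GibbsAux.gibbs_facts hn Hσ (hV Hσ hHσV)
  rw [← hσdef] at hfactsσ
  obtain ⟨hσPD, hσ1, cσ, hmlogσ⟩ := hfactsσ
  -- moment matching for `mlog` of Gibbs states
  have key : ∀ (K : Matrix (Fin n) (Fin n) ℂ), K ∈ V → ∀ c : ℝ,
      Matrix.trace (ρ * (K - c • (1 : Matrix (Fin n) (Fin n) ℂ)))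
        = Matrix.trace (σ * (K - c • (1 : Matrix (Fin n) (Fin n) ℂ))) := by
    intro K hK c
    rw [Matrix.mul_sub, Matrix.mul_sub, Matrix.trace_sub, Matrix.trace_sub,
      hmatch K hK, Matrix.mul_smul, Matrix.mul_one, Matrix.mul_smul, Matrix.mul_one,
      Matrix.trace_smul, Matrix.trace_smul, hρ1, hσ1]
  have hρmlogσ : Matrix.trace (ρ * mlog σ) = Matrix.trace (σ * mlog σ) := by
    rw [hmlogσ]; exact key Hσ hHσV cσ
  constructor
  · intro τ hτG
    rw [hG] at hτG
    obtain ⟨Hτ, hHτV, hτdef⟩ := hτG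
    have hfactsτ := GibbsAux.gibbs_facts hn Hτ (hV Hτ hHτV)
    rw [← hτdef] at hfactsτ
    obtain ⟨hτPD, hτ1, cτ, hmlogτ⟩ := hfactsτ
    have hρmlogτ : Matrix.trace (ρ * mlog τ) = Matrix.trace (σ * mlog τ) := by
      rw [hmlogτ]; exact key Hτ hHτV cτ
    have hklein := GibbsAux.klein_matrix σ τ hσPD hτPD hσ1 hτ1
    rw [relEntropy, relEntropy, Complex.sub_re, Complex.sub_re, hρmlogσ, hρmlogτ]
    linarith
  · rw [relEntropy, vnEntropy, vnEntropy, Complex.sub_re, hρmlogσ]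
    ring
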